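/- Let E, F, G be Banach ideal spaces on a common σ-finite measure space, with E having the Fatou property, and let 0 < θ < 1. Then M(G, E) ≡ M(G^{1-θ}F^θ, E^{1-θ}F^θ)^{(1-θ)} isometrically, where M(X, Y) = {x ∈ L⁰ : xy ∈ Y for all y ∈ X} with the operator norm ‖x‖ = sup_{‖y‖_X ≤ 1} ‖xy‖_Y. -/

import Mathlib

open MeasureTheory

/-- A Banach ideal space on a measure space: a linear subspace of measurable
functions (mod null sets) with a complete lattice norm having the ideal property,
and a weak unit (saturation). -/
structure IdealSpace {α : Type*} [MeasurableSpace α] (μ : Measure α) where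
  carrier : Set (α → ℝ)
  norm : (α → ℝ) → ℝ
  zero_mem : (0 : α → ℝ) ∈ carrier
  add_mem : ∀ {f g : α → ℝ}, f ∈ carrier → g ∈ carrier → f + g ∈ carrier
  smul_mem : ∀ (c : ℝ) {f : α → ℝ}, f ∈ carrier → c • f ∈ carrier
  norm_nonneg : ∀ f, 0 ≤ norm f
  norm_eq_zero : ∀ f ∈ carrier, (norm f = 0 ↔ f =ᵐ[μ] 0)
  norm_add : ∀ f g, f ∈ carrier → g ∈ carrier → norm (f + g) ≤ norm f + norm g
  norm_smul : ∀ (c : ℝ) (f : α → ℝ), norm (c • f) = |c| * norm f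
  ideal_mem : ∀ {f g : α → ℝ}, g ∈ carrier → (∀ᵐ a ∂μ, |f a| ≤ |g a|) → f ∈ carrier
  ideal_norm : ∀ {f g : α → ℝ}, g ∈ carrier → (∀ᵐ a ∂μ, |f a| ≤ |g a|) → norm f ≤ norm g
  weak_unit : ∃ w ∈ carrier, ∀ᵐ a ∂μ, 0 < w a
  complete : ∀ x : ℕ → α → ℝ, (∀ n, x n ∈ carrier) →
    (∀ ε > 0, ∃ N, ∀ m ≥ N, ∀ n ≥ N, norm (x m - x n) < ε) →
    ∃ f ∈ carrier, Filter.Tendsto (fun n => norm (x n - f)) Filter.atTop (nhds 0)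

variable {α : Type*} [MeasurableSpace α] {μ : Measure α}

/-- The pointwise product space E ⊙ F. -/
def prodSet (E F : IdealSpace μ) : Set (α → ℝ) :=
  {z | ∃ x ∈ E.carrier, ∃ y ∈ F.carrier, z =ᵐ[μ] x * y}

/-- The quasi-norm of the pointwise product space E ⊙ F. -/
noncomputable def prodNorm (E F : IdealSpace μ) (z : α → ℝ) : ℝ :=
  sInf {r | ∃ x ∈ E.carrier, ∃ y ∈ F.carrier, z =ᵐ[μ] x * y ∧ r = E.norm x * F.norm y}

/-- The Fatou property. -/
def HasFatou (E : IdealSpace μ) : Prop :=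
  ∀ (x : ℕ → α → ℝ) (f : α → ℝ), (∀ n, x n ∈ E.carrier) →
    (∀ᵐ a ∂μ, ∀ n, 0 ≤ x n a ∧ x n a ≤ x (n + 1) a) →
    (∀ᵐ a ∂μ, Filter.Tendsto (fun n => x n a) Filter.atTop (nhds (f a))) →
    (∃ C, ∀ n, E.norm (x n) ≤ C) →
    f ∈ E.carrier ∧ Filter.Tendsto (fun n => E.norm (x n)) Filter.atTop (nhds (E.norm f))

/-- The space of pointwise multipliers M(S, T): membership. -/
def multSet (S T : Set (α → ℝ)) : Set (α → ℝ) :=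
  {x | ∀ y ∈ S, x * y ∈ T}

/-- The operator norm of a pointwise multiplier from (S, NS) to (·, NT). -/
noncomputable def multNorm (S : Set (α → ℝ)) (NS NT : (α → ℝ) → ℝ) (x : α → ℝ) : ℝ :=
  sSup {r | ∃ y ∈ S, NS y ≤ 1 ∧ r = NT (x * y)}

/-- The Calderón space X^θ Y^{1-θ}: membership. -/
def caldSet (θ : ℝ) (X Y : IdealSpace μ) : Set (α → ℝ) :=
  {z | ∃ lam > (0 : ℝ), ∃ x ∈ X.carrier, ∃ y ∈ Y.carrier, X.norm x ≤ 1 ∧ Y.norm y ≤ 1 ∧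
      ∀ᵐ a ∂μ, |z a| ≤ lam * |x a| ^ θ * |y a| ^ (1 - θ)}

/-- The Calderón space norm: the infimum of admissible λ. -/
noncomputable def caldNorm (θ : ℝ) (X Y : IdealSpace μ) (z : α → ℝ) : ℝ :=
  sInf {lam | 0 < lam ∧ ∃ x ∈ X.carrier, ∃ y ∈ Y.carrier, X.norm x ≤ 1 ∧ Y.norm y ≤ 1 ∧
      ∀ᵐ a ∂μ, |z a| ≤ lam * |x a| ^ θ * |y a| ^ (1 - θ)}

open Filter

namespace IdealSpace

variable {α : Type*} [MeasurableSpace α] {μ : Measure α}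

lemma norm_zero' (E : IdealSpace μ) : E.norm 0 = 0 := by
  have h := E.norm_smul 0 0
  simpa using h

lemma sub_mem' (E : IdealSpace μ) {f g : α → ℝ} (hf : f ∈ E.carrier) (hg : g ∈ E.carrier) :
    f - g ∈ E.carrier := by
  have h2 : f - g = f + (-1 : ℝ) • g := by funext a; simp [sub_eq_add_neg]
  rw [h2]; exact E.add_mem hf (E.smul_mem (-1) hg)

lemma abs_mem (E : IdealSpace μ) {f : α → ℝ} (hf : f ∈ E.carrier) :
    (fun a => |f a|) ∈ E.carrier :=
  E.ideal_mem hf (by filter_upwards with a; simp [abs_abs])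

lemma norm_abs (E : IdealSpace μ) {f : α → ℝ} (hf : f ∈ E.carrier) :
    E.norm (fun a => |f a|) = E.norm f := by
  refine le_antisymm (E.ideal_norm hf ?_) (E.ideal_norm (E.abs_mem hf) ?_) <;>
    · filter_upwards with a; simp [abs_abs]

/-- normalized nonnegative weak unit -/
lemma exists_unit (E : IdealSpace μ) :
    ∃ u : α → ℝ, u ∈ E.carrier ∧ E.norm u ≤ 1 ∧ (∀ a, 0 ≤ u a) ∧ (∀ᵐ a ∂μ, 0 < u a) := by
  obtain ⟨w, hw, hwpos⟩ := E.weak_unit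
  set m := max 1 (E.norm w) with hm
  have hm0 : (0:ℝ) < m := lt_of_lt_of_le one_pos (le_max_left _ _)
  have hdom : ∀ᵐ a ∂μ, |(fun a => |w a| / m) a| ≤ |(m⁻¹ • w) a| := by
    filter_upwards with a
    simp only [Pi.smul_apply, smul_eq_mul, abs_mul, abs_abs, abs_inv, abs_of_pos hm0]
    rw [div_eq_inv_mul, abs_mul, abs_inv, abs_of_pos hm0, abs_abs]
  refine ⟨fun a => |w a| / m, E.ideal_mem (E.smul_mem m⁻¹ hw) hdom, ?_, ?_, ?_⟩
  · refine le_trans (E.ideal_norm (E.smul_mem m⁻¹ hw) hdom) ?_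
    rw [E.norm_smul, abs_inv, abs_of_pos hm0]
    rw [inv_mul_le_iff₀ hm0, mul_one]
    exact le_max_right _ _
  · intro a; positivity
  · filter_upwards [hwpos] with a ha; positivity

lemma sum_mem (E : IdealSpace μ) (e : ℕ → α → ℝ) (hmem : ∀ k, e k ∈ E.carrier) (n : ℕ) :
    (fun a => ∑ k ∈ Finset.range n, e k a) ∈ E.carrier := by
  induction n with
  | zero => simpa using (show (fun _ : α => (0:ℝ)) ∈ E.carrier from E.zero_mem)
  | succ n ih =>
      have : (fun a => ∑ k ∈ Finset.range (n+1), e k a)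
          = (fun a => ∑ k ∈ Finset.range n, e k a) + e n := by
        funext a; simp [Finset.sum_range_succ]
      rw [this]; exact E.add_mem ih (hmem n)

lemma norm_sum_le (E : IdealSpace μ) (e : ℕ → α → ℝ) (hmem : ∀ k, e k ∈ E.carrier) (n : ℕ) :
    E.norm (fun a => ∑ k ∈ Finset.range n, e k a) ≤ ∑ k ∈ Finset.range n, E.norm (e k) := by
  induction n with
  | zero => simpa using le_of_eq (show E.norm (fun _ : α => (0:ℝ)) = 0 from E.norm_zero')
  | succ n ih =>
      have h1 : (fun a => ∑ k ∈ Finset.range (n+1), e k a)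
          = (fun a => ∑ k ∈ Finset.range n, e k a) + e n := by
        funext a; simp [Finset.sum_range_succ]
      rw [h1, Finset.sum_range_succ]
      exact le_trans (E.norm_add _ _ (E.sum_mem e hmem n) (hmem n)) (by linarith)

/-- an increasing sequence converging in norm is a.e. dominated by its limit -/
lemma le_of_tendsto_norm_sub (E : IdealSpace μ) (s : ℕ → α → ℝ) (f : α → ℝ)
    (hmem : ∀ n, s n ∈ E.carrier) (hf : f ∈ E.carrier)
    (hmono : ∀ n m, n ≤ m → ∀ a, s n a ≤ s m a)
    (hten : Tendsto (fun n => E.norm (s n - f)) atTop (nhds 0)) :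
    ∀ n, ∀ᵐ a ∂μ, s n a ≤ f a := by
  intro n
  set p : α → ℝ := fun a => max (s n a - f a) 0 with hp
  have hsub : ∀ m, s m - f ∈ E.carrier := fun m => E.sub_mem' (hmem m) hf
  have hdom : ∀ m, n ≤ m → ∀ᵐ a ∂μ, |p a| ≤ |(s m - f) a| := by
    intro m hm
    filter_upwards with a
    simp only [hp, Pi.sub_apply]
    rcases le_or_gt (s n a) (f a) with h | h
    · rw [max_eq_right (by linarith)]; simp [abs_nonneg]
    · rw [max_eq_left (by linarith)]
      have h2 : s n a - f a ≤ s m a - f a := by have := hmono n m hm a; linarith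
      rw [abs_of_pos (by linarith)]
      exact le_trans h2 (le_abs_self _)
  have hple : ∀ m, n ≤ m → E.norm p ≤ E.norm (s m - f) :=
    fun m hm => E.ideal_norm (hsub m) (hdom m hm)
  have hle0 : E.norm p ≤ 0 :=
    ge_of_tendsto hten (eventually_atTop.2 ⟨n, hple⟩)
  have hpm : p ∈ E.carrier := E.ideal_mem (hsub n) (hdom n le_rfl)
  have h0 := (E.norm_eq_zero p hpm).1 (le_antisymm hle0 (E.norm_nonneg p))
  filter_upwards [h0] with a ha
  by_contra hcon
  push_neg at hcon
  simp only [hp, Pi.zero_apply] at ha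
  rw [max_eq_left (by linarith)] at ha
  linarith

end IdealSpace
section Cald

variable {α : Type*} [MeasurableSpace α] {μ : Measure α}

/-- witness set for the Calderon norm -/
def caldW (θ : ℝ) (X Y : IdealSpace μ) (z : α → ℝ) : Set ℝ :=
  {lam | 0 < lam ∧ ∃ x ∈ X.carrier, ∃ y ∈ Y.carrier, X.norm x ≤ 1 ∧ Y.norm y ≤ 1 ∧
      ∀ᵐ a ∂μ, |z a| ≤ lam * |x a| ^ θ * |y a| ^ (1 - θ)}

lemma caldNorm_eq_sInf (θ : ℝ) (X Y : IdealSpace μ) (z : α → ℝ) :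
    caldNorm θ X Y z = sInf (caldW θ X Y z) := rfl

lemma mem_caldSet_iff {θ : ℝ} {X Y : IdealSpace μ} {z : α → ℝ} :
    z ∈ caldSet θ X Y ↔ (caldW θ X Y z).Nonempty := by
  constructor
  · rintro ⟨lam, hlam, rest⟩; exact ⟨lam, hlam, rest⟩
  · rintro ⟨lam, hlam, rest⟩; exact ⟨lam, hlam, rest⟩

lemma caldW_bddBelow (θ : ℝ) (X Y : IdealSpace μ) (z : α → ℝ) :
    BddBelow (caldW θ X Y z) := ⟨0, fun lam hlam => le_of_lt hlam.1⟩

lemma caldNorm_nonneg (θ : ℝ) (X Y : IdealSpace μ) (z : α → ℝ) :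
    0 ≤ caldNorm θ X Y z :=
  Real.sInf_nonneg (fun lam hlam => le_of_lt hlam.1)

lemma caldNorm_le_of_mem {θ : ℝ} {X Y : IdealSpace μ} {z : α → ℝ} {lam : ℝ}
    (h : lam ∈ caldW θ X Y z) : caldNorm θ X Y z ≤ lam :=
  csInf_le (caldW_bddBelow θ X Y z) h

lemma caldNorm_extract {θ : ℝ} {X Y : IdealSpace μ} {z : α → ℝ} {D ε : ℝ}
    (hz : z ∈ caldSet θ X Y) (hle : caldNorm θ X Y z ≤ D) (hε : 0 < ε) :
    ∃ lam ∈ caldW θ X Y z, lam < D + ε := by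
  have hne : (caldW θ X Y z).Nonempty := mem_caldSet_iff.1 hz
  have : sInf (caldW θ X Y z) < D + ε := lt_of_le_of_lt hle (by linarith)
  exact (csInf_lt_iff (caldW_bddBelow θ X Y z) hne).1 this

lemma caldW_mono {θ : ℝ} {X Y : IdealSpace μ} {z₁ z₂ : α → ℝ}
    (h : ∀ᵐ a ∂μ, |z₁ a| ≤ |z₂ a|) : caldW θ X Y z₂ ⊆ caldW θ X Y z₁ := by
  rintro lam ⟨hlam, x, hx, y, hy, hxn, hyn, hae⟩
  exact ⟨hlam, x, hx, y, hy, hxn, hyn, by filter_upwards [h, hae] with a h1 h2; linarith⟩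

lemma caldSet_mono {θ : ℝ} {X Y : IdealSpace μ} {z₁ z₂ : α → ℝ}
    (h : ∀ᵐ a ∂μ, |z₁ a| ≤ |z₂ a|) (hz₂ : z₂ ∈ caldSet θ X Y) : z₁ ∈ caldSet θ X Y :=
  mem_caldSet_iff.2 ((mem_caldSet_iff.1 hz₂).mono (caldW_mono h))

lemma caldNorm_mono {θ : ℝ} {X Y : IdealSpace μ} {z₁ z₂ : α → ℝ}
    (h : ∀ᵐ a ∂μ, |z₁ a| ≤ |z₂ a|) (hz₂ : z₂ ∈ caldSet θ X Y) :
    caldNorm θ X Y z₁ ≤ caldNorm θ X Y z₂ :=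
  csInf_le_csInf (caldW_bddBelow θ X Y z₁) (mem_caldSet_iff.1 hz₂) (caldW_mono h)

lemma caldW_smul {θ : ℝ} {X Y : IdealSpace μ} {z : α → ℝ} {lam c : ℝ} (hc : 0 < c)
    (h : lam ∈ caldW θ X Y z) : c * lam ∈ caldW θ X Y (c • z) := by
  obtain ⟨hlam, x, hx, y, hy, hxn, hyn, hae⟩ := h
  refine ⟨by positivity, x, hx, y, hy, hxn, hyn, ?_⟩
  filter_upwards [hae] with a ha
  have : |(c • z) a| = c * |z a| := by
    simp [abs_mul, abs_of_pos hc]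
  rw [this]
  calc c * |z a| ≤ c * (lam * |x a| ^ θ * |y a| ^ (1 - θ)) := by
        exact mul_le_mul_of_nonneg_left ha (le_of_lt hc)
    _ = c * lam * |x a| ^ θ * |y a| ^ (1 - θ) := by ring

lemma smul_smul_cancel {c : ℝ} (hc : c ≠ 0) (z : α → ℝ) : c⁻¹ • (c • z) = z := by
  rw [smul_smul, inv_mul_cancel₀ hc, one_smul]

lemma caldNorm_smul_le {θ : ℝ} {X Y : IdealSpace μ} {z : α → ℝ} {c : ℝ} (hc : 0 < c) :
    caldNorm θ X Y (c • z) ≤ c * caldNorm θ X Y z := by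
  rcases Set.eq_empty_or_nonempty (caldW θ X Y z) with h | h
  · -- then caldW (c • z) is empty as well
    have h2 : caldW θ X Y (c • z) = ∅ := by
      by_contra hne
      obtain ⟨lam, hlam⟩ := Set.nonempty_iff_ne_empty.2 hne
      have := caldW_smul (show (0:ℝ) < c⁻¹ by positivity) hlam
      rw [smul_smul_cancel (ne_of_gt hc)] at this
      exact Set.eq_empty_iff_forall_notMem.1 h _ this
    rw [caldNorm_eq_sInf, caldNorm_eq_sInf, h, h2, Real.sInf_empty, mul_zero]
  · rw [caldNorm_eq_sInf, caldNorm_eq_sInf]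
    have : ∀ lam ∈ caldW θ X Y z, sInf (caldW θ X Y (c • z)) ≤ c * lam :=
      fun lam hlam => csInf_le (caldW_bddBelow _ _ _ _) (caldW_smul hc hlam)
    -- so sInf (caldW (c•z)) / c is a lower bound of caldW z
    have h3 : sInf (caldW θ X Y (c • z)) / c ≤ sInf (caldW θ X Y z) := by
      apply le_csInf h
      intro lam hlam
      rw [div_le_iff₀ hc]
      calc sInf (caldW θ X Y (c • z)) ≤ c * lam := this lam hlam
        _ = lam * c := mul_comm _ _
    calc sInf (caldW θ X Y (c • z)) = (sInf (caldW θ X Y (c • z)) / c) * c := by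
          field_simp
      _ ≤ sInf (caldW θ X Y z) * c := mul_le_mul_of_nonneg_right h3 (le_of_lt hc)
      _ = c * sInf (caldW θ X Y z) := mul_comm _ _

lemma caldNorm_smul {θ : ℝ} {X Y : IdealSpace μ} {z : α → ℝ} {c : ℝ} (hc : 0 < c) :
    caldNorm θ X Y (c • z) = c * caldNorm θ X Y z := by
  refine le_antisymm (caldNorm_smul_le hc) ?_
  have h := caldNorm_smul_le (θ := θ) (X := X) (Y := Y) (z := c • z)
    (show (0:ℝ) < c⁻¹ by positivity)
  rw [smul_smul_cancel (ne_of_gt hc)] at h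
  calc c * caldNorm θ X Y z ≤ c * (c⁻¹ * caldNorm θ X Y (c • z)) :=
        mul_le_mul_of_nonneg_left h (le_of_lt hc)
    _ = caldNorm θ X Y (c • z) := by field_simp

lemma zero_mem_caldSet {θ : ℝ} (hθ : θ ≠ 0) (X Y : IdealSpace μ) :
    (0 : α → ℝ) ∈ caldSet θ X Y := by
  refine ⟨1, one_pos, 0, X.zero_mem, 0, Y.zero_mem, ?_, ?_, ?_⟩
  · rw [X.norm_zero']; norm_num
  · rw [Y.norm_zero']; norm_num
  · filter_upwards with a
    simp [Real.zero_rpow hθ]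

lemma caldNorm_zero {θ : ℝ} (hθ : θ ≠ 0) (X Y : IdealSpace μ) :
    caldNorm θ X Y (0 : α → ℝ) = 0 := by
  refine le_antisymm ?_ (caldNorm_nonneg _ _ _ _)
  by_contra hcon
  push_neg at hcon
  have : ∀ lam : ℝ, 0 < lam → caldNorm θ X Y (0 : α → ℝ) ≤ lam := by
    intro lam hlam
    refine caldNorm_le_of_mem ⟨hlam, 0, X.zero_mem, 0, Y.zero_mem, ?_, ?_, ?_⟩
    · rw [X.norm_zero']; norm_num
    · rw [Y.norm_zero']; norm_num
    · filter_upwards with a; simp [Real.zero_rpow hθ]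
  have := this (caldNorm θ X Y (0 : α → ℝ) / 2) (by linarith)
  linarith

end Cald
section Easy

variable {α : Type*} [MeasurableSpace α] {μ : Measure α}

lemma easy_wit {θ' : ℝ} (hθ0 : 0 < θ') (hθ1 : θ' < 1) (E F G : IdealSpace μ)
    (x z g f : α → ℝ) (lam m : ℝ)
    (hg : g ∈ G.carrier) (hxg : x * g ∈ E.carrier) (hm : 0 < m)
    (hnorm : E.norm (x * g) ≤ m) (hf : f ∈ F.carrier) (hfn : F.norm f ≤ 1)
    (hlam : 0 < lam)
    (hz : ∀ᵐ a ∂μ, |z a| ≤ lam * |g a| ^ θ' * |f a| ^ (1 - θ')) :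
    (lam * m ^ θ') ∈ caldW θ' E F ((fun a => |x a| ^ θ') * z) := by
  set e : α → ℝ := fun a => |x a * g a| * m⁻¹ with he
  have hedom : ∀ᵐ a ∂μ, |e a| ≤ |(m⁻¹ • (x * g)) a| := by
    filter_upwards with a
    simp only [he, Pi.smul_apply, smul_eq_mul, Pi.mul_apply, abs_mul, abs_abs, abs_inv,
      abs_of_pos hm]
    rw [mul_comm]
  have hem : e ∈ E.carrier := E.ideal_mem (E.smul_mem m⁻¹ hxg) hedom
  have hen : E.norm e ≤ 1 := by
    refine le_trans (E.ideal_norm (E.smul_mem m⁻¹ hxg) hedom) ?_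
    rw [E.norm_smul, abs_inv, abs_of_pos hm, inv_mul_le_iff₀ hm, mul_one]
    exact hnorm
  refine ⟨by positivity, e, hem, f, hf, hen, hfn, ?_⟩
  filter_upwards [hz] with a ha
  have hxa : (0:ℝ) ≤ |x a| := abs_nonneg _
  have h1 : |((fun a => |x a| ^ θ') * z) a| = |x a| ^ θ' * |z a| := by
    simp only [Pi.mul_apply, abs_mul]
    rw [abs_of_nonneg (Real.rpow_nonneg hxa θ')]
  rw [h1]
  have h2 : |x a| ^ θ' * |z a| ≤ |x a| ^ θ' * (lam * |g a| ^ θ' * |f a| ^ (1 - θ')) :=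
    mul_le_mul_of_nonneg_left ha (Real.rpow_nonneg hxa θ')
  refine le_trans h2 (le_of_eq ?_)
  have hea : |e a| = e a := abs_of_nonneg (by positivity)
  have hxg' : |x a * g a| = m * e a := by
    simp only [he]; field_simp
  have : |x a| ^ θ' * |g a| ^ θ' = (m * e a) ^ θ' := by
    rw [← Real.mul_rpow hxa (abs_nonneg _), ← abs_mul, hxg']
  calc |x a| ^ θ' * (lam * |g a| ^ θ' * |f a| ^ (1 - θ'))
      = (|x a| ^ θ' * |g a| ^ θ') * lam * |f a| ^ (1 - θ') := by ring
    _ = (m * e a) ^ θ' * lam * |f a| ^ (1 - θ') := by rw [this]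
    _ = (m ^ θ' * (e a) ^ θ') * lam * |f a| ^ (1 - θ') := by
        rw [Real.mul_rpow (le_of_lt hm) (by positivity)]
    _ = lam * m ^ θ' * |e a| ^ θ' * |f a| ^ (1 - θ') := by rw [hea]; ring

lemma easy_mem {θ' : ℝ} (hθ0 : 0 < θ') (hθ1 : θ' < 1) (E F G : IdealSpace μ)
    (x : α → ℝ) (hx : ∀ g ∈ G.carrier, x * g ∈ E.carrier) :
    ∀ z ∈ caldSet θ' G F, (fun a => |x a| ^ θ') * z ∈ caldSet θ' E F := by
  rintro z ⟨lam, hlam, g, hg, f, hf, hgn, hfn, hae⟩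
  set m := max 1 (E.norm (x * g)) with hm
  have hm0 : (0:ℝ) < m := lt_of_lt_of_le one_pos (le_max_left _ _)
  exact mem_caldSet_iff.2 ⟨lam * m ^ θ',
    easy_wit hθ0 hθ1 E F G x z g f lam m hg (hx g hg) hm0 (le_max_right _ _) hf hfn hlam hae⟩

lemma easy_bound {θ' : ℝ} (hθ0 : 0 < θ') (hθ1 : θ' < 1) (E F G : IdealSpace μ)
    (x : α → ℝ) (M : ℝ) (hM : 0 ≤ M)
    (hx : ∀ g ∈ G.carrier, G.norm g ≤ 1 → x * g ∈ E.carrier ∧ E.norm (x * g) ≤ M) :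
    ∀ z ∈ caldSet θ' G F, caldNorm θ' G F z ≤ 1 →
      caldNorm θ' E F ((fun a => |x a| ^ θ') * z) ≤ M ^ θ' := by
  intro z hz hzn
  have key : ∀ t : ℝ, 0 < t → caldNorm θ' E F ((fun a => |x a| ^ θ') * z) ≤ (max M t) ^ θ' := by
    intro t ht
    have hmt : (0:ℝ) < max M t := lt_of_lt_of_le ht (le_max_right _ _)
    have hstep : ∀ lam ∈ caldW θ' G F z,
        caldNorm θ' E F ((fun a => |x a| ^ θ') * z) ≤ lam * (max M t) ^ θ' := by
      rintro lam ⟨hlam, g, hg, f, hf, hgn, hfn, hae⟩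
      exact caldNorm_le_of_mem (easy_wit hθ0 hθ1 E F G x z g f lam (max M t) hg
        (hx g hg hgn).1 hmt (le_trans (hx g hg hgn).2 (le_max_left _ _)) hf hfn hlam hae)
    have hlb : caldNorm θ' E F ((fun a => |x a| ^ θ') * z) / (max M t) ^ θ'
        ≤ caldNorm θ' G F z := by
      apply le_csInf (mem_caldSet_iff.1 hz)
      intro lam hlam
      rw [div_le_iff₀ (Real.rpow_pos_of_pos hmt θ')]
      exact hstep lam hlam
    have := le_trans hlb hzn
    rwa [div_le_one (Real.rpow_pos_of_pos hmt θ')] at this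
  rcases eq_or_lt_of_le hM with h0 | h0
  · -- M = 0
    rw [← h0, Real.zero_rpow (ne_of_gt hθ0)]
    by_contra hcon
    push_neg at hcon
    set r := caldNorm θ' E F ((fun a => |x a| ^ θ') * z) with hr
    have ht : (0:ℝ) < (r / 2) ^ θ'⁻¹ := Real.rpow_pos_of_pos (by linarith) _
    have := key _ ht
    rw [← h0, max_eq_right (le_of_lt ht)] at this
    rw [Real.rpow_inv_rpow (by linarith) (ne_of_gt hθ0)] at this
    linarith
  · have := key M h0
    rwa [max_self] at this

end Easy
section Trunc

open Filter

variable {α : Type*} [MeasurableSpace α] {μ : Measure α}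

lemma trunc_exists (x g u : α → ℝ) (hu : ∀ a, 0 ≤ u a) (n : ℕ) :
    ∃ gn : α → ℝ, (∀ a, |gn a| ≤ |g a|) ∧
      (∀ a, |x a * gn a| = min |x a * g a| ((n:ℝ) * u a)) := by
  classical
  refine ⟨fun a => if |x a * g a| ≤ (n:ℝ) * u a then g a else
    g a * (((n:ℝ) * u a) / |x a * g a|), fun a => ?_, fun a => ?_⟩
  · by_cases h : |x a * g a| ≤ (n:ℝ) * u a
    · simp only [h, if_true, ↓reduceIte, le_refl]
    · simp only [h, if_false]
      push_neg at h
      have hnu : (0:ℝ) ≤ (n:ℝ) * u a := mul_nonneg (Nat.cast_nonneg n) (hu a)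
      have hpos : (0:ℝ) < |x a * g a| := lt_of_le_of_lt hnu h
      set q : ℝ := ((n:ℝ) * u a) / |x a * g a| with hq
      have hq0 : 0 ≤ q := div_nonneg hnu (abs_nonneg _)
      rw [abs_mul, abs_of_nonneg hq0]
      calc |g a| * q ≤ |g a| * 1 := by
            apply mul_le_mul_of_nonneg_left _ (abs_nonneg _)
            rw [hq, div_le_one hpos]; exact le_of_lt h
        _ = |g a| := mul_one _
  · by_cases h : |x a * g a| ≤ (n:ℝ) * u a
    · simp only [h, if_true]
      rw [min_eq_left h]
    · simp only [h, if_false]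
      push_neg at h
      have hnu : (0:ℝ) ≤ (n:ℝ) * u a := mul_nonneg (Nat.cast_nonneg n) (hu a)
      have hpos : (0:ℝ) < |x a * g a| := lt_of_le_of_lt hnu h
      rw [min_eq_right (le_of_lt h)]
      set q : ℝ := ((n:ℝ) * u a) / |x a * g a| with hq
      have hq0 : 0 ≤ q := div_nonneg hnu (abs_nonneg _)
      have h2 : x a * (g a * q) = (x a * g a) * q := by ring
      rw [h2, abs_mul, abs_of_nonneg hq0, hq]
      field_simp

lemma trunc_bound (E G : IdealSpace μ) (hE : HasFatou E) (x : α → ℝ) (M : ℝ)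
    (hM : ∀ g' ∈ G.carrier, G.norm g' ≤ 1 → E.norm (x * g') ≤ M) :
    ∀ g ∈ G.carrier, G.norm g ≤ 1 → x * g ∈ E.carrier ∧ E.norm (x * g) ≤ M := by
  intro g hg hgn
  obtain ⟨u, hu, hun, hu0, hupos⟩ := E.exists_unit
  set h : ℕ → α → ℝ := fun n a => min |x a * g a| ((n:ℝ) * u a) with hh
  have hgn' : ∀ n : ℕ, ∃ gn : α → ℝ, gn ∈ G.carrier ∧ G.norm gn ≤ 1 ∧
      (∀ a, |x a * gn a| = h n a) := by
    intro n
    obtain ⟨gn, hd, he⟩ := trunc_exists x g u hu0 n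
    exact ⟨gn, G.ideal_mem hg (Eventually.of_forall hd),
      le_trans (G.ideal_norm hg (Eventually.of_forall hd)) hgn, he⟩
  have hnonneg : ∀ n a, 0 ≤ h n a := by
    intro n a; simp only [hh, le_min_iff]
    exact ⟨abs_nonneg _, mul_nonneg (Nat.cast_nonneg n) (hu0 a)⟩
  have hhmem : ∀ n, h n ∈ E.carrier := by
    intro n
    apply E.ideal_mem (E.smul_mem (n:ℝ) hu)
    filter_upwards with a
    simp only [Pi.smul_apply, smul_eq_mul]
    rw [abs_of_nonneg (hnonneg n a), abs_of_nonneg (mul_nonneg (Nat.cast_nonneg n) (hu0 a))]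
    exact min_le_right _ _
  have hhnorm : ∀ n, E.norm (h n) ≤ M := by
    intro n
    obtain ⟨gn, hgnm, hgnn, he⟩ := hgn' n
    have hxgn : x * gn ∈ E.carrier := by
      apply E.ideal_mem (hhmem n)
      filter_upwards with a
      rw [abs_of_nonneg (hnonneg n a), Pi.mul_apply, he a]
    have : E.norm (h n) ≤ E.norm (x * gn) := by
      apply E.ideal_norm hxgn
      filter_upwards with a
      rw [abs_of_nonneg (hnonneg n a), Pi.mul_apply, ← he a]
    exact le_trans this (hM gn hgnm hgnn)
  have hmono : ∀ᵐ a ∂μ, ∀ n, 0 ≤ h n a ∧ h n a ≤ h (n+1) a := by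
    filter_upwards with a n
    refine ⟨hnonneg n a, min_le_min le_rfl ?_⟩
    have : ((n:ℝ)) * u a ≤ ((n:ℝ)+1) * u a := by nlinarith [hu0 a]
    simpa [add_mul] using this
  have hten : ∀ᵐ a ∂μ, Tendsto (fun n => h n a) atTop (nhds (|x a * g a|)) := by
    filter_upwards [hupos] with a ha
    obtain ⟨N, hN⟩ := exists_nat_ge (|x a * g a| / u a)
    apply tendsto_atTop_of_eventually_const (i₀ := N)
    intro n hn
    have : |x a * g a| ≤ (n:ℝ) * u a := by
      rw [div_le_iff₀ ha] at hN
      calc |x a * g a| ≤ (N:ℝ) * u a := hN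
        _ ≤ (n:ℝ) * u a := by
            apply mul_le_mul_of_nonneg_right _ (le_of_lt ha)
            exact_mod_cast hn
    simp only [hh]; rw [min_eq_left this]
  obtain ⟨hfm, hft⟩ := hE h (fun a => |x a * g a|) hhmem hmono hten ⟨M, hhnorm⟩
  have hnf : E.norm (fun a => |x a * g a|) ≤ M := le_of_tendsto hft
    (Eventually.of_forall hhnorm)
  constructor
  · apply E.ideal_mem hfm
    filter_upwards with a
    simp [abs_abs]
  · refine le_trans (E.ideal_norm hfm ?_) hnf
    filter_upwards with a
    simp [abs_abs]

end Trunc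
section Sums

variable {α : Type*} [MeasurableSpace α] {μ : Measure α}

lemma sum_mem_fin (E : IdealSpace μ) {ι : Type*} (t : Finset ι) (e : ι → α → ℝ)
    (hmem : ∀ k ∈ t, e k ∈ E.carrier) :
    (fun a => ∑ k ∈ t, e k a) ∈ E.carrier := by
  classical
  induction t using Finset.induction_on with
  | empty => simpa using (show (fun _ : α => (0:ℝ)) ∈ E.carrier from E.zero_mem)
  | @insert i t' hx ih =>
      have h1 : (fun a => ∑ k ∈ insert i t', e k a) = e i + (fun a => ∑ k ∈ t', e k a) := by
        funext a; simp [Finset.sum_insert hx]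
      rw [h1]
      exact E.add_mem (hmem i (Finset.mem_insert_self i t'))
        (ih (fun k hk => hmem k (Finset.mem_insert_of_mem hk)))

lemma norm_sum_le_fin (E : IdealSpace μ) {ι : Type*} (t : Finset ι) (e : ι → α → ℝ)
    (hmem : ∀ k ∈ t, e k ∈ E.carrier) :
    E.norm (fun a => ∑ k ∈ t, e k a) ≤ ∑ k ∈ t, E.norm (e k) := by
  classical
  induction t using Finset.induction_on with
  | empty => simpa using le_of_eq (show E.norm (fun _ : α => (0:ℝ)) = 0 from E.norm_zero')
  | @insert i t' hx ih =>
      have h1 : (fun a => ∑ k ∈ insert i t', e k a) = e i + (fun a => ∑ k ∈ t', e k a) := by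
        funext a; simp [Finset.sum_insert hx]
      rw [h1, Finset.sum_insert hx]
      refine le_trans (E.norm_add _ _ (hmem i (Finset.mem_insert_self i t'))
        (sum_mem_fin E t' e (fun k hk => hmem k (Finset.mem_insert_of_mem hk)))) ?_
      have := ih (fun k hk => hmem k (Finset.mem_insert_of_mem hk))
      linarith

end Sums
section Iteration

open Filter

variable {α : Type*} [MeasurableSpace α] {μ : Measure α}

lemma iteration_aux (E F : IdealSpace μ) (hE : HasFatou E) {β : ℝ} (hβ0 : 0 < β) (hβ1 : β < 1)
    (h : α → ℝ) (hh : ∀ a, 0 ≤ h a) (D : ℝ) (hD : 0 < D)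
    (hstep : ∀ f : α → ℝ, f ∈ F.carrier → F.norm f ≤ 1 → (∀ a, 0 ≤ f a) →
      ∃ e, e ∈ E.carrier ∧ E.norm e ≤ 1 ∧ (∀ a, 0 ≤ e a) ∧
      ∃ f', f' ∈ F.carrier ∧ F.norm f' ≤ 1 ∧ (∀ a, 0 ≤ f' a) ∧
        ∀ᵐ a ∂μ, h a ^ β * f a ^ (1 - β) ≤ D * (e a ^ β * f' a ^ (1 - β)))
    (δ ε : ℝ) (hδ0 : 0 < δ) (hδ1 : δ < 1) (hε : 0 < ε) :
    h ∈ E.carrier ∧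
      E.norm h ≤ (D / (1 - δ) ^ (1 - β)) ^ (1/β) * Real.exp (ε * (1 - β) / β) := by
  classical
  obtain ⟨f₀, hf₀m, hf₀n, hf₀0, hf₀pos⟩ := F.exists_unit
  have h1δ : (0:ℝ) < 1 - δ := by linarith
  have h1β : (0:ℝ) < 1 - β := by linarith
  set Dδ : ℝ := D / (1 - δ) ^ (1 - β) with hDδ
  have hDδ0 : 0 < Dδ := div_pos hD (Real.rpow_pos_of_pos h1δ _)
  set Cond : (α → ℝ) → Prop := fun f => f ∈ F.carrier ∧ F.norm f ≤ 1 ∧ (∀ a, 0 ≤ f a)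
    with hCondDef
  -- one-step with convex combination
  have step2 : ∀ f : α → ℝ, ∃ e f' : α → ℝ, Cond f →
      (e ∈ E.carrier ∧ E.norm e ≤ 1 ∧ (∀ a, 0 ≤ e a)) ∧
      (Cond f' ∧ (∀ a, δ * f₀ a ≤ f' a)) ∧
      (∀ᵐ a ∂μ, h a ^ β * f a ^ (1 - β) ≤ Dδ * (e a ^ β * f' a ^ (1 - β))) := by
    intro f
    by_cases hc : Cond f
    · obtain ⟨e, hem, hen, he0, fr, hfrm, hfrn, hfr0, hae⟩ := hstep f hc.1 hc.2.1 hc.2.2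
      refine ⟨e, fun a => (1 - δ) * fr a + δ * f₀ a, fun _ => ⟨⟨hem, hen, he0⟩, ⟨⟨?_, ?_, ?_⟩, ?_⟩, ?_⟩⟩
      · have : (fun a => (1 - δ) * fr a + δ * f₀ a) = (1 - δ) • fr + δ • f₀ := by
          funext a; simp
        rw [this]
        exact F.add_mem (F.smul_mem _ hfrm) (F.smul_mem _ hf₀m)
      · have h2 : (fun a => (1 - δ) * fr a + δ * f₀ a) = (1 - δ) • fr + δ • f₀ := by
          funext a; simp
        rw [h2]
        refine le_trans (F.norm_add _ _ (F.smul_mem _ hfrm) (F.smul_mem _ hf₀m)) ?_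
        rw [F.norm_smul, F.norm_smul, abs_of_pos h1δ, abs_of_pos hδ0]
        nlinarith
      · intro a
        show 0 ≤ (1 - δ) * fr a + δ * f₀ a
        have := hfr0 a; have := hf₀0 a; nlinarith
      · intro a
        show δ * f₀ a ≤ (1 - δ) * fr a + δ * f₀ a
        have := hfr0 a; nlinarith
      · filter_upwards [hae] with a ha
        refine le_trans ha ?_
        have hkey : fr a ^ (1 - β) ≤ ((1-δ) * fr a + δ * f₀ a) ^ (1 - β) / (1 - δ) ^ (1 - β) := by
          rw [le_div_iff₀ (Real.rpow_pos_of_pos h1δ _)]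
          rw [← Real.mul_rpow (hfr0 a) (le_of_lt h1δ)]
          apply Real.rpow_le_rpow (by nlinarith [hfr0 a]) ?_ (le_of_lt h1β)
          have := hf₀0 a; nlinarith
        calc D * (e a ^ β * fr a ^ (1 - β))
            ≤ D * (e a ^ β * (((1-δ) * fr a + δ * f₀ a) ^ (1 - β) / (1 - δ) ^ (1 - β))) := by
              apply mul_le_mul_of_nonneg_left _ (le_of_lt hD)
              exact mul_le_mul_of_nonneg_left hkey (Real.rpow_nonneg (he0 a) β)
          _ = Dδ * (e a ^ β * ((1-δ) * fr a + δ * f₀ a) ^ (1 - β)) := by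
              rw [hDδ]; field_simp; try ring
    · exact ⟨0, 0, fun hc' => absurd hc' hc⟩
  choose eF fF hspec using step2
  set fS : ℕ → α → ℝ := fun n => Nat.rec f₀ (fun _ prev => fF prev) n with hfS
  have hfSs : ∀ n, fS (n+1) = fF (fS n) := fun n => rfl
  set eS : ℕ → α → ℝ := fun n => eF (fS n) with heS
  have hCondS : ∀ n, Cond (fS n) := by
    intro n; induction n with
    | zero => exact ⟨hf₀m, hf₀n, hf₀0⟩
    | succ n ih => exact ((hspec (fS n) ih).2.1).1
  have heSP : ∀ n, eS n ∈ E.carrier ∧ E.norm (eS n) ≤ 1 ∧ (∀ a, 0 ≤ eS n a) :=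
    fun n => (hspec (fS n) (hCondS n)).1
  have hlow : ∀ n a, δ * f₀ a ≤ fS (n+1) a := fun n => (hspec (fS n) (hCondS n)).2.1.2
  have hineq : ∀ n, ∀ᵐ a ∂μ, h a ^ β * (fS n a) ^ (1-β) ≤
      Dδ * ((eS n a) ^ β * (fS (n+1) a) ^ (1-β)) := fun n => (hspec (fS n) (hCondS n)).2.2
  have hfSpos : ∀ n a, 0 < f₀ a → 0 < fS n a := by
    intro n a ha
    cases n with
    | zero => exact ha
    | succ n => exact lt_of_lt_of_le (by nlinarith) (hlow n a)
  have hfS0' : ∀ n a, 0 ≤ fS n a := fun n => (hCondS n).2.2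
  -- Borel-Cantelli machinery
  set b : ℕ → α → ℝ := fun n a => if fS n a ≤ Real.exp (n * ε) * f₀ a then 0 else f₀ a with hb
  have hb0 : ∀ n a, 0 ≤ b n a := by
    intro n a; simp only [hb]
    split
    · exact le_refl 0
    · exact hf₀0 a
  have hbdom : ∀ n, ∀ a, |b n a| ≤ |(Real.exp (-((n:ℝ) * ε)) • fS n) a| := by
    intro n a
    simp only [hb, Pi.smul_apply, smul_eq_mul]
    rw [abs_of_nonneg (hb0 n a)]
    rw [abs_of_nonneg (mul_nonneg (le_of_lt (Real.exp_pos _)) (hfS0' n a))]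
    simp only [hb]
    split
    · exact mul_nonneg (le_of_lt (Real.exp_pos _)) (hfS0' n a)
    · rename_i hbad
      push_neg at hbad
      rw [Real.exp_neg, inv_mul_eq_div, le_div_iff₀ (Real.exp_pos _)]
      calc f₀ a * Real.exp ((n:ℝ) * ε) = Real.exp ((n:ℝ) * ε) * f₀ a := mul_comm _ _
        _ ≤ fS n a := le_of_lt hbad
  have hbmem : ∀ n, b n ∈ F.carrier :=
    fun n => F.ideal_mem (F.smul_mem _ (hCondS n).1) (Eventually.of_forall (hbdom n))
  have hbnorm : ∀ n, F.norm (b n) ≤ Real.exp (-((n:ℝ) * ε)) := by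
    intro n
    refine le_trans (F.ideal_norm (F.smul_mem _ (hCondS n).1) (Eventually.of_forall (hbdom n))) ?_
    rw [F.norm_smul, abs_of_pos (Real.exp_pos _)]
    calc Real.exp (-((n:ℝ)*ε)) * F.norm (fS n) ≤ Real.exp (-((n:ℝ)*ε)) * 1 :=
          mul_le_mul_of_nonneg_left (hCondS n).2.1 (le_of_lt (Real.exp_pos _))
      _ = _ := mul_one _
  set s : ℕ → α → ℝ := fun N a => ∑ k ∈ Finset.range N, b k a with hs
  have hsmem : ∀ N, s N ∈ F.carrier := fun N => sum_mem_fin F _ _ (fun k _ => hbmem k)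
  set r : ℝ := Real.exp (-ε) with hr
  have hr0 : 0 < r := Real.exp_pos _
  have hr1 : r < 1 := Real.exp_lt_one_iff.2 (by linarith)
  have hbnorm' : ∀ n : ℕ, F.norm (b n) ≤ r ^ n := by
    intro n
    refine le_trans (hbnorm n) (le_of_eq ?_)
    rw [hr, ← Real.exp_nat_mul]
    ring_nf
  have hsub_norm : ∀ m n : ℕ, n ≤ m → F.norm (s m - s n) ≤ r ^ n / (1 - r) := by
    intro m n hnm
    have hdiff : s m - s n = (fun a => ∑ k ∈ Finset.Ico n m, b k a) := by
      funext a
      simp only [Pi.sub_apply, hs]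
      rw [Finset.sum_Ico_eq_sub _ hnm]
    rw [hdiff]
    refine le_trans (norm_sum_le_fin F _ _ (fun k _ => hbmem k)) ?_
    refine le_trans (Finset.sum_le_sum (fun k _ => hbnorm' k)) ?_
    exact geom_sum_Ico_le_of_lt_one (le_of_lt hr0) hr1
  have hcauchy : ∀ ε' > 0, ∃ N, ∀ m ≥ N, ∀ n ≥ N, F.norm (s m - s n) < ε' := by
    intro ε' hε'
    have hten : Tendsto (fun n : ℕ => r ^ n / (1 - r)) atTop (nhds 0) := by
      have := tendsto_pow_atTop_nhds_zero_of_lt_one (le_of_lt hr0) hr1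
      simpa using this.div_const (1 - r)
    obtain ⟨N, hN⟩ := (Metric.tendsto_atTop.1 hten) ε' hε'
    refine ⟨N, fun m hm n hn => ?_⟩
    have hNb : r ^ N / (1 - r) < ε' := by
      have := hN N le_rfl
      rwa [Real.dist_eq, sub_zero,
        abs_of_nonneg (div_nonneg (pow_nonneg (le_of_lt hr0) N) (by linarith))] at this
    have key : ∀ m' n' : ℕ, N ≤ n' → n' ≤ m' → F.norm (s m' - s n') < ε' := by
      intro m' n' hNn' hn'm'
      refine lt_of_le_of_lt (le_trans (hsub_norm m' n' hn'm') ?_) hNb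
      apply div_le_div_of_nonneg_right _ (by linarith)
      · exact pow_le_pow_of_le_one (le_of_lt hr0) (le_of_lt hr1) hNn'
    rcases le_total n m with hc | hc
    · exact key m n hn hc
    · have : s m - s n = (-1 : ℝ) • (s n - s m) := by funext a; simp
      rw [this, F.norm_smul]
      simpa using key n m hm hc
  obtain ⟨fstar, hfsm, hfst⟩ := F.complete s hsmem hcauchy
  have hsmono : ∀ n m : ℕ, n ≤ m → ∀ a, s n a ≤ s m a := by
    intro n m hnm a
    apply Finset.sum_le_sum_of_subset_of_nonneg (Finset.range_subset_range.2 hnm)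
    intro k _ _; exact hb0 k a
  have hsle : ∀ N, ∀ᵐ a ∂μ, s N a ≤ fstar a :=
    F.le_of_tendsto_norm_sub s fstar hsmem hfsm hsmono hfst
  -- pointwise Borel-Cantelli
  have hBC : ∀ a, 0 < f₀ a → (∀ N, s N a ≤ fstar a) →
      ∃ N, ∀ n, N ≤ n → fS n a ≤ Real.exp (n * ε) * f₀ a := by
    intro a hf0 hsa
    by_contra hcon; push_neg at hcon
    have key : ∀ K : ℕ, ∃ N, (K:ℝ) * f₀ a ≤ s N a := by
      intro K; induction K with
      | zero => exact ⟨0, by simp [hs]⟩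
      | succ K ih =>
          obtain ⟨N, hN⟩ := ih
          obtain ⟨n, hnN, hbad⟩ := hcon N
          refine ⟨n+1, ?_⟩
          have hbn : b n a = f₀ a := by simp only [hb]; rw [if_neg (not_le.2 hbad)]
          have hnotin : n ∉ Finset.range N := by simp; omega
          have hsplit : s N a + b n a ≤ s (n+1) a := by
            have hsub2 : insert n (Finset.range N) ⊆ Finset.range (n+1) := by
              intro k hk
              simp only [Finset.mem_insert, Finset.mem_range] at hk ⊢
              rcases hk with hk | hk
              · omega
              · omega
            have h3 : ∑ k ∈ insert n (Finset.range N), b k a ≤ s (n+1) a :=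
              Finset.sum_le_sum_of_subset_of_nonneg hsub2 (fun k _ _ => hb0 k a)
            rw [Finset.sum_insert hnotin] at h3
            simp only [hs] at h3 ⊢
            linarith
          push_cast
          rw [hbn] at hsplit
          nlinarith
    obtain ⟨K, hK⟩ := exists_nat_gt (fstar a / f₀ a)
    obtain ⟨N, hN⟩ := key K
    rw [div_lt_iff₀ hf0] at hK
    have := hsa N
    nlinarith
  -- telescoping
  have htel : ∀ a, 0 < f₀ a →
      (∀ n, h a ^ β * (fS n a) ^ (1-β) ≤ Dδ * ((eS n a) ^ β * (fS (n+1) a) ^ (1-β))) →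
      ∀ n : ℕ, h a ^ ((n:ℝ) * β) * f₀ a ^ (1-β) ≤
        Dδ ^ n * ((∏ k ∈ Finset.range n, eS k a) ^ β * (fS n a) ^ (1-β)) := by
    intro a hf0 hrec n
    induction n with
    | zero =>
        have h00 : fS 0 = f₀ := rfl
        simp [Real.rpow_zero, h00]
    | succ n ih =>
        have hprod0 : 0 ≤ ∏ k ∈ Finset.range n, eS k a :=
          Finset.prod_nonneg (fun k _ => (heSP k).2.2 a)
        have hcast : ((n+1 : ℕ):ℝ) * β = (n:ℝ) * β + β := by push_cast; ring
        rw [hcast, Real.rpow_add' (hh a) (by positivity)]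
        calc h a ^ ((n:ℝ) * β) * h a ^ β * f₀ a ^ (1-β)
            = (h a ^ ((n:ℝ) * β) * f₀ a ^ (1-β)) * h a ^ β := by ring
          _ ≤ (Dδ ^ n * ((∏ k ∈ Finset.range n, eS k a) ^ β * (fS n a) ^ (1-β))) * h a ^ β :=
              mul_le_mul_of_nonneg_right ih (Real.rpow_nonneg (hh a) β)
          _ = (Dδ ^ n * (∏ k ∈ Finset.range n, eS k a) ^ β) * (h a ^ β * (fS n a) ^ (1-β)) := by
              ring
          _ ≤ (Dδ ^ n * (∏ k ∈ Finset.range n, eS k a) ^ β) *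
              (Dδ * ((eS n a) ^ β * (fS (n+1) a) ^ (1-β))) := by
              apply mul_le_mul_of_nonneg_left (hrec n)
              positivity
          _ = Dδ ^ (n+1) * (((∏ k ∈ Finset.range n, eS k a) ^ β * (eS n a) ^ β) *
              (fS (n+1) a) ^ (1-β)) := by ring
          _ = Dδ ^ (n+1) * ((∏ k ∈ Finset.range (n+1), eS k a) ^ β * (fS (n+1) a) ^ (1-β)) := by
              rw [← Real.mul_rpow hprod0 ((heSP n).2.2 a), Finset.prod_range_succ]
  -- pointwise bound on the good sets
  set K : ℝ := Dδ ^ (1/β) * Real.exp (ε * (1 - β) / β) with hK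
  have hK0 : 0 < K := mul_pos (Real.rpow_pos_of_pos hDδ0 _) (Real.exp_pos _)
  have hbound : ∀ a, 0 < f₀ a →
      (∀ n, h a ^ β * (fS n a) ^ (1-β) ≤ Dδ * ((eS n a) ^ β * (fS (n+1) a) ^ (1-β))) →
      ∀ n : ℕ, 1 ≤ n → fS n a ≤ Real.exp (n * ε) * f₀ a →
      h a ≤ K * ((n:ℝ)⁻¹ * ∑ k ∈ Finset.range n, eS k a) := by
    intro a hf0 hrec n hn1 hcond
    have hn0 : (0:ℝ) < (n:ℝ) := by exact_mod_cast hn1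
    have hprod0 : 0 ≤ ∏ k ∈ Finset.range n, eS k a :=
      Finset.prod_nonneg (fun k _ => (heSP k).2.2 a)
    have hT := htel a hf0 hrec n
    have hT2 : h a ^ ((n:ℝ) * β) * f₀ a ^ (1-β) ≤
        (Dδ ^ n * ((∏ k ∈ Finset.range n, eS k a) ^ β * Real.exp ((n:ℝ)*ε) ^ (1-β))) *
          f₀ a ^ (1-β) := by
      refine le_trans hT ?_
      have : (fS n a) ^ (1-β) ≤ (Real.exp ((n:ℝ)*ε) * f₀ a) ^ (1-β) :=
        Real.rpow_le_rpow (hfS0' n a) hcond (le_of_lt h1β)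
      rw [Real.mul_rpow (le_of_lt (Real.exp_pos _)) (le_of_lt hf0)] at this
      calc Dδ ^ n * ((∏ k ∈ Finset.range n, eS k a) ^ β * (fS n a) ^ (1-β))
          ≤ Dδ ^ n * ((∏ k ∈ Finset.range n, eS k a) ^ β *
            (Real.exp ((n:ℝ)*ε) ^ (1-β) * f₀ a ^ (1-β))) := by
            apply mul_le_mul_of_nonneg_left _ (by positivity)
            exact mul_le_mul_of_nonneg_left this (by positivity)
        _ = (Dδ ^ n * ((∏ k ∈ Finset.range n, eS k a) ^ β * Real.exp ((n:ℝ)*ε) ^ (1-β))) *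
            f₀ a ^ (1-β) := by ring
    have hT3 : h a ^ ((n:ℝ) * β) ≤
        Dδ ^ n * ((∏ k ∈ Finset.range n, eS k a) ^ β * Real.exp ((n:ℝ)*ε) ^ (1-β)) := by
      have hf0p : 0 < f₀ a ^ (1-β) := Real.rpow_pos_of_pos hf0 _
      exact le_of_mul_le_mul_right (by linarith [hT2]) hf0p
    -- raise to power 1/(n β)
    have hp0 : (0:ℝ) < 1 / ((n:ℝ) * β) := by positivity
    have hha' : h a = (h a ^ ((n:ℝ)*β)) ^ (1/((n:ℝ)*β)) := by
      rw [← Real.rpow_mul (hh a)]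
      rw [mul_one_div, div_self (by positivity), Real.rpow_one]
    rw [hha']
    have hmono2 := Real.rpow_le_rpow (Real.rpow_nonneg (hh a) _) hT3 (le_of_lt hp0)
    refine le_trans hmono2 ?_
    -- expand the right-hand side
    have hDn : (Dδ ^ n : ℝ) = Dδ ^ ((n:ℝ)) := (Real.rpow_natCast Dδ n).symm
    have hgoal_eq : (Dδ ^ n * ((∏ k ∈ Finset.range n, eS k a) ^ β *
        Real.exp ((n:ℝ)*ε) ^ (1-β))) ^ (1/((n:ℝ)*β)) =
        Dδ ^ (1/β) * ((∏ k ∈ Finset.range n, eS k a) ^ ((n:ℝ)⁻¹) *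
          Real.exp (ε * (1-β)/β)) := by
      rw [Real.mul_rpow (by positivity) (by positivity),
        Real.mul_rpow (by positivity) (by positivity)]
      congr 1
      · rw [hDn, ← Real.rpow_mul (le_of_lt hDδ0)]
        · congr 1
          field_simp
          try ring
      · congr 1
        · rw [← Real.rpow_mul hprod0]
          congr 1
          field_simp
          try ring
        · rw [← Real.exp_mul, ← Real.exp_mul]
          congr 1
          field_simp
          try ring
    rw [hgoal_eq]
    -- AM-GM
    have hgm : (∏ k ∈ Finset.range n, eS k a) ^ ((n:ℝ)⁻¹) ≤
        (n:ℝ)⁻¹ * ∑ k ∈ Finset.range n, eS k a := by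
      have hamgm := Real.geom_mean_le_arith_mean_weighted (Finset.range n)
        (fun _ => (n:ℝ)⁻¹) (fun k => eS k a)
        (fun i _ => by positivity)
        (by simp [Finset.card_range]; field_simp)
        (fun i _ => (heSP i).2.2 a)
      calc (∏ k ∈ Finset.range n, eS k a) ^ ((n:ℝ)⁻¹)
          = ∏ k ∈ Finset.range n, (eS k a) ^ ((n:ℝ)⁻¹) :=
            (Real.finset_prod_rpow _ _ (fun k _ => (heSP k).2.2 a) _).symm
        _ ≤ ∑ k ∈ Finset.range n, (n:ℝ)⁻¹ * eS k a := hamgm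
        _ = (n:ℝ)⁻¹ * ∑ k ∈ Finset.range n, eS k a := by rw [Finset.mul_sum]
    calc Dδ ^ (1/β) * ((∏ k ∈ Finset.range n, eS k a) ^ ((n:ℝ)⁻¹) * Real.exp (ε * (1-β)/β))
        ≤ Dδ ^ (1/β) * (((n:ℝ)⁻¹ * ∑ k ∈ Finset.range n, eS k a) * Real.exp (ε * (1-β)/β)) := by
          apply mul_le_mul_of_nonneg_left _ (by positivity)
          exact mul_le_mul_of_nonneg_right hgm (le_of_lt (Real.exp_pos _))
      _ = K * ((n:ℝ)⁻¹ * ∑ k ∈ Finset.range n, eS k a) := by rw [hK]; ring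
  -- the Fatou sequence
  set v : ℕ → α → ℝ := fun n a => if fS n a ≤ Real.exp (n * ε) * f₀ a then h a else 0 with hv
  set AM : ℕ → α → ℝ := fun n a => (n:ℝ)⁻¹ * ∑ k ∈ Finset.range n, eS k a with hAM
  have hAMmem : ∀ n : ℕ, AM n ∈ E.carrier := by
    intro n
    have h1 : AM n = (n:ℝ)⁻¹ • (fun a => ∑ k ∈ Finset.range n, eS k a) := by
      funext a; simp [hAM]
    rw [h1]; exact E.smul_mem _ (sum_mem_fin E _ _ (fun k _ => (heSP k).1))
  have hAM0 : ∀ n a, 0 ≤ AM n a := by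
    intro n a
    simp only [hAM]
    exact mul_nonneg (by positivity) (Finset.sum_nonneg (fun k _ => (heSP k).2.2 a))
  have hAMnorm : ∀ n : ℕ, 1 ≤ n → E.norm (AM n) ≤ 1 := by
    intro n hn
    have hn0 : (0:ℝ) < (n:ℝ) := by exact_mod_cast hn
    have h1 : AM n = (n:ℝ)⁻¹ • (fun a => ∑ k ∈ Finset.range n, eS k a) := by
      funext a; simp [hAM]
    rw [h1, E.norm_smul, abs_of_pos (by positivity)]
    have h2 := norm_sum_le_fin E (Finset.range n) (fun k => eS k) (fun k _ => (heSP k).1)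
    have h3 : ∑ k ∈ Finset.range n, E.norm (eS k) ≤ (n:ℝ) := by
      calc ∑ k ∈ Finset.range n, E.norm (eS k) ≤ ∑ k ∈ Finset.range n, 1 :=
            Finset.sum_le_sum (fun k _ => (heSP k).2.1)
        _ ≤ (n:ℝ) := by simp
    calc (n:ℝ)⁻¹ * E.norm (fun a => ∑ k ∈ Finset.range n, eS k a) ≤ (n:ℝ)⁻¹ * (n:ℝ) := by
          apply mul_le_mul_of_nonneg_left (le_trans h2 h3) (by positivity)
      _ = 1 := inv_mul_cancel₀ (ne_of_gt hn0)
  have hGood : ∀ᵐ a ∂μ, (0 < f₀ a) ∧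
      (∀ n, h a ^ β * (fS n a) ^ (1-β) ≤ Dδ * ((eS n a) ^ β * (fS (n+1) a) ^ (1-β))) ∧
      (∀ N, s N a ≤ fstar a) := by
    filter_upwards [hf₀pos, (ae_all_iff).2 hineq, (ae_all_iff).2 hsle] with a ha hb' hc'
    exact ⟨ha, hb', hc'⟩
  have hvdom : ∀ n : ℕ, 1 ≤ n → ∀ᵐ a ∂μ, |v n a| ≤ |(K • AM n) a| := by
    intro n hn
    filter_upwards [hGood] with a hga
    obtain ⟨hf0, hrec, -⟩ := hga
    simp only [hv, Pi.smul_apply, smul_eq_mul]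
    have hKAM : 0 ≤ K * AM n a := mul_nonneg (le_of_lt hK0) (hAM0 n a)
    rw [abs_of_nonneg hKAM]
    split
    · rename_i hcond
      rw [abs_of_nonneg (hh a)]
      have := hbound a hf0 hrec n hn hcond
      simpa [hAM] using this
    · simpa using hKAM
  have hvmem : ∀ n : ℕ, 1 ≤ n → v n ∈ E.carrier ∧ E.norm (v n) ≤ K := by
    intro n hn
    refine ⟨E.ideal_mem (E.smul_mem K (hAMmem n)) (hvdom n hn),
      le_trans (E.ideal_norm (E.smul_mem K (hAMmem n)) (hvdom n hn)) ?_⟩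
    rw [E.norm_smul, abs_of_pos hK0]
    calc K * E.norm (AM n) ≤ K * 1 := mul_le_mul_of_nonneg_left (hAMnorm n hn) (le_of_lt hK0)
      _ = K := mul_one K
  set m' : ℕ → α → ℝ := fun N a =>
    if (∀ n, N ≤ n → fS n a ≤ Real.exp (n * ε) * f₀ a) then h a else 0 with hm'
  have hm'0 : ∀ N a, 0 ≤ m' N a := by
    intro N a; simp only [hm']; split
    · exact hh a
    · exact le_refl 0
  have hm'le : ∀ N a, m' N a ≤ v (N+1) a := by
    intro N a; simp only [hm', hv]
    split
    · rename_i hcnd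
      rw [if_pos (hcnd (N+1) (by omega))]
    · split
      · exact hh a
      · exact le_refl 0
  have hm'mem : ∀ N, m' N ∈ E.carrier ∧ E.norm (m' N) ≤ K := by
    intro N
    have hdom : ∀ᵐ a ∂μ, |m' N a| ≤ |v (N+1) a| := by
      filter_upwards with a
      rw [abs_of_nonneg (hm'0 N a)]
      exact le_trans (hm'le N a) (le_abs_self _)
    exact ⟨E.ideal_mem (hvmem (N+1) (by omega)).1 hdom,
      le_trans (E.ideal_norm (hvmem (N+1) (by omega)).1 hdom) (hvmem (N+1) (by omega)).2⟩
  have hm'mono : ∀ᵐ a ∂μ, ∀ N, 0 ≤ m' N a ∧ m' N a ≤ m' (N+1) a := by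
    filter_upwards with a N
    refine ⟨hm'0 N a, ?_⟩
    simp only [hm']
    split
    · rename_i hcnd
      rw [if_pos (fun n hn => hcnd n (by omega))]
    · split
      · exact hh a
      · exact le_refl 0
  have hm'ten : ∀ᵐ a ∂μ, Filter.Tendsto (fun N => m' N a) atTop (nhds (h a)) := by
    filter_upwards [hGood] with a hga
    obtain ⟨hf0, -, hsa⟩ := hga
    obtain ⟨N₀, hN₀⟩ := hBC a hf0 hsa
    apply tendsto_atTop_of_eventually_const (i₀ := N₀)
    intro N hN
    simp only [hm']
    rw [if_pos (fun n hn => hN₀ n (by omega))]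
  obtain ⟨hhm, hht⟩ := hE m' h (fun N => (hm'mem N).1) hm'mono hm'ten ⟨K, fun N => (hm'mem N).2⟩
  refine ⟨hhm, ?_⟩
  have := le_of_tendsto hht (Eventually.of_forall (fun N => (hm'mem N).2))
  rwa [hK, hDδ] at this

end Iteration
section Hard

open Filter

variable {α : Type*} [MeasurableSpace α] {μ : Measure α}

lemma iteration (E F : IdealSpace μ) (hE : HasFatou E) {β : ℝ} (hβ0 : 0 < β) (hβ1 : β < 1)
    (h : α → ℝ) (hh : ∀ a, 0 ≤ h a) (D : ℝ) (hD : 0 < D)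
    (hstep : ∀ f : α → ℝ, f ∈ F.carrier → F.norm f ≤ 1 → (∀ a, 0 ≤ f a) →
      ∃ e, e ∈ E.carrier ∧ E.norm e ≤ 1 ∧ (∀ a, 0 ≤ e a) ∧
      ∃ f', f' ∈ F.carrier ∧ F.norm f' ≤ 1 ∧ (∀ a, 0 ≤ f' a) ∧
        ∀ᵐ a ∂μ, h a ^ β * f a ^ (1 - β) ≤ D * (e a ^ β * f' a ^ (1 - β))) :
    h ∈ E.carrier ∧ E.norm h ≤ D ^ (1/β) := by
  have hmem := (iteration_aux E F hE hβ0 hβ1 h hh D hD hstep (1/2) 1 (by norm_num)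
    (by norm_num) one_pos).1
  refine ⟨hmem, ?_⟩
  have hseq : ∀ j : ℕ, E.norm h ≤
      (D / (1 - 1/((j:ℝ)+2)) ^ (1-β)) ^ (1/β) * Real.exp ((1/((j:ℝ)+1)) * (1-β)/β) := by
    intro j
    have hδ0 : (0:ℝ) < 1/((j:ℝ)+2) := by positivity
    have hδ1 : 1/((j:ℝ)+2) < 1 := by
      rw [div_lt_one (by positivity)]
      have : (0:ℝ) ≤ (j:ℝ) := Nat.cast_nonneg j
      linarith
    have hε0 : (0:ℝ) < 1/((j:ℝ)+1) := by positivity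
    exact (iteration_aux E F hE hβ0 hβ1 h hh D hD hstep _ _ hδ0 hδ1 hε0).2
  have ht1 : Tendsto (fun j : ℕ => 1/((j:ℝ)+2)) atTop (nhds 0) := by
    apply squeeze_zero (fun j => by positivity) (fun j => ?_)
      tendsto_one_div_add_atTop_nhds_zero_nat
    apply one_div_le_one_div_of_le (by positivity)
    linarith
  have ht2 : Tendsto (fun j : ℕ => 1 - 1/((j:ℝ)+2)) atTop (nhds 1) := by
    have hc : Tendsto (fun _ : ℕ => (1:ℝ)) atTop (nhds 1) := tendsto_const_nhds
    simpa using hc.sub ht1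
  have ht3 : Tendsto (fun j : ℕ => (1 - 1/((j:ℝ)+2)) ^ (1-β)) atTop (nhds 1) := by
    have := ht2.rpow_const (p := 1-β) (Or.inl one_ne_zero)
    simpa using this
  have ht4 : Tendsto (fun j : ℕ => D / (1 - 1/((j:ℝ)+2)) ^ (1-β)) atTop (nhds D) := by
    have hc : Tendsto (fun _ : ℕ => D) atTop (nhds D) := tendsto_const_nhds
    simpa using (show Tendsto (fun j : ℕ => D / (1 - 1/((j:ℝ)+2)) ^ (1-β)) atTop (nhds (D / 1)) from hc.div ht3 one_ne_zero)
  have ht5 : Tendsto (fun j : ℕ => (D / (1 - 1/((j:ℝ)+2)) ^ (1-β)) ^ (1/β)) atTop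
      (nhds (D ^ (1/β))) := ht4.rpow_const (Or.inr (by positivity))
  have ht6 : Tendsto (fun j : ℕ => (1/((j:ℝ)+1)) * (1-β)/β) atTop (nhds 0) := by
    have := (tendsto_one_div_add_atTop_nhds_zero_nat.mul_const (1-β)).div_const β
    simpa using this
  have ht7 : Tendsto (fun j : ℕ => Real.exp ((1/((j:ℝ)+1)) * (1-β)/β)) atTop (nhds 1) := by
    have := (Real.continuous_exp.tendsto 0).comp ht6
    simpa using (show Tendsto (fun j : ℕ => Real.exp ((1/((j:ℝ)+1)) * (1-β)/β)) atTop (nhds (Real.exp 0)) from this)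
  have htK : Tendsto (fun j : ℕ => (D / (1 - 1/((j:ℝ)+2)) ^ (1-β)) ^ (1/β) *
      Real.exp ((1/((j:ℝ)+1)) * (1-β)/β)) atTop (nhds (D ^ (1/β))) := by
    have := ht5.mul ht7
    simpa using this
  exact ge_of_tendsto htK (Eventually.of_forall hseq)

lemma hard (E F G : IdealSpace μ) (hE : HasFatou E) {β : ℝ} (hβ0 : 0 < β) (hβ1 : β < 1)
    (x : α → ℝ) (D : ℝ) (hD : 0 ≤ D)
    (hub : ∀ z ∈ caldSet β G F, caldNorm β G F z ≤ 1 →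
      caldNorm β E F ((fun a => |x a| ^ β) * z) ≤ D) :
    ∀ g ∈ G.carrier, G.norm g ≤ 1 → x * g ∈ E.carrier ∧ E.norm (x * g) ≤ D ^ (1/β) := by
  intro g hg hgn
  obtain ⟨u, hum, hun, hu0, hupos⟩ := E.exists_unit
  set h : ℕ → α → ℝ := fun n a => min |x a * g a| ((n:ℝ) * u a) with hh
  have hh0 : ∀ n a, 0 ≤ h n a :=
    fun n a => le_min (abs_nonneg _) (mul_nonneg (Nat.cast_nonneg n) (hu0 a))
  have hkey : ∀ n : ℕ, 1 ≤ n → h n ∈ E.carrier ∧ E.norm (h n) ≤ D ^ (1/β) := by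
    intro n hn
    obtain ⟨gn, hgd, hge⟩ := trunc_exists x g u hu0 n
    have hgnm : gn ∈ G.carrier := G.ideal_mem hg (Eventually.of_forall hgd)
    have hgnn : G.norm gn ≤ 1 := le_trans (G.ideal_norm hg (Eventually.of_forall hgd)) hgn
    have hn0 : (0:ℝ) < (n:ℝ) := by exact_mod_cast hn
    -- the iteration hypothesis, for any positive slack ε₀
    have hiter : ∀ ε₀ : ℝ, 0 < ε₀ → h n ∈ E.carrier ∧ E.norm (h n) ≤ (D + ε₀) ^ (1/β) := by
      intro ε₀ hε₀
      apply iteration E F hE hβ0 hβ1 (h n) (hh0 n) (D + ε₀) (by linarith)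
      intro f hfm hfn hf0
      set z : α → ℝ := fun a => |gn a| ^ β * f a ^ (1-β) with hz
      have haez : ∀ᵐ a ∂μ, |z a| ≤ 1 * |gn a| ^ β * |f a| ^ (1-β) := by
        filter_upwards with a
        rw [one_mul, hz]
        have : |(|gn a| ^ β * f a ^ (1-β))| = |gn a| ^ β * f a ^ (1-β) := by
          rw [abs_of_nonneg (mul_nonneg (Real.rpow_nonneg (abs_nonneg _) _)
            (Real.rpow_nonneg (hf0 a) _))]
        rw [this, abs_of_nonneg (hf0 a)]
      have hzw : (1:ℝ) ∈ caldW β G F z := ⟨one_pos, gn, hgnm, f, hfm, hgnn, hfn, haez⟩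
      have hzmem : z ∈ caldSet β G F := mem_caldSet_iff.2 ⟨1, hzw⟩
      have hznorm : caldNorm β G F z ≤ 1 := caldNorm_le_of_mem hzw
      have himg_eq : ∀ a, ((fun a => |x a| ^ β) * z) a = h n a ^ β * f a ^ (1-β) := by
        intro a
        simp only [Pi.mul_apply, hz]
        rw [← mul_assoc, ← Real.mul_rpow (abs_nonneg _) (abs_nonneg _), ← abs_mul, hge a]
      have himg_mem : ((fun a => |x a| ^ β) * z) ∈ caldSet β E F := by
        refine ⟨(n:ℝ) ^ β, Real.rpow_pos_of_pos hn0 β, u, hum, f, hfm, hun, hfn, ?_⟩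
        filter_upwards with a
        rw [himg_eq a, abs_of_nonneg (mul_nonneg (Real.rpow_nonneg (hh0 n a) _)
          (Real.rpow_nonneg (hf0 a) _))]
        have h1 : h n a ^ β ≤ ((n:ℝ) * u a) ^ β :=
          Real.rpow_le_rpow (hh0 n a) (min_le_right _ _) (le_of_lt hβ0)
        have h2 : ((n:ℝ) * u a) ^ β = (n:ℝ) ^ β * |u a| ^ β := by
          rw [Real.mul_rpow (Nat.cast_nonneg n) (hu0 a), abs_of_nonneg (hu0 a)]
        rw [abs_of_nonneg (hf0 a)]
        calc h n a ^ β * f a ^ (1-β) ≤ ((n:ℝ) * u a) ^ β * f a ^ (1-β) :=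
              mul_le_mul_of_nonneg_right h1 (Real.rpow_nonneg (hf0 a) _)
          _ = (n:ℝ) ^ β * |u a| ^ β * f a ^ (1-β) := by rw [h2]
      have hD2 := hub z hzmem hznorm
      obtain ⟨lam, hlamW, hlam_lt⟩ := caldNorm_extract himg_mem hD2 hε₀
      obtain ⟨hlam0, e', he'm, f'', hf''m, he'n, hf''n, hae⟩ := hlamW
      refine ⟨fun a => |e' a|, E.abs_mem he'm, le_of_eq_of_le (E.norm_abs he'm) he'n,
        fun a => abs_nonneg _, fun a => |f'' a|, F.abs_mem hf''m,
        le_of_eq_of_le (F.norm_abs hf''m) hf''n, fun a => abs_nonneg _, ?_⟩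
      filter_upwards [hae] with a ha
      rw [himg_eq a] at ha
      have h3 : |h n a ^ β * f a ^ (1-β)| = h n a ^ β * f a ^ (1-β) :=
        abs_of_nonneg (mul_nonneg (Real.rpow_nonneg (hh0 n a) _) (Real.rpow_nonneg (hf0 a) _))
      rw [h3] at ha
      refine le_trans ha ?_
      have h4 : (0:ℝ) ≤ |e' a| ^ β * |f'' a| ^ (1-β) := by positivity
      calc lam * |e' a| ^ β * |f'' a| ^ (1-β)
          = lam * (|e' a| ^ β * |f'' a| ^ (1-β)) := by ring
        _ ≤ (D + ε₀) * (|e' a| ^ β * |f'' a| ^ (1-β)) :=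
            mul_le_mul_of_nonneg_right (le_of_lt hlam_lt) h4
        _ = (D + ε₀) * ((fun a => |e' a|) a ^ β * (fun a => |f'' a|) a ^ (1-β)) := rfl
    refine ⟨(hiter 1 one_pos).1, ?_⟩
    have hten : Tendsto (fun j : ℕ => (D + 1/((j:ℝ)+1)) ^ (1/β)) atTop (nhds (D ^ (1/β))) := by
      have hb : Tendsto (fun j : ℕ => D + 1/((j:ℝ)+1)) atTop (nhds D) := by
        have hc : Tendsto (fun _ : ℕ => D) atTop (nhds D) := tendsto_const_nhds
        simpa using hc.add tendsto_one_div_add_atTop_nhds_zero_nat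
      exact hb.rpow_const (Or.inr (by positivity))
    apply ge_of_tendsto hten
    apply Eventually.of_forall
    intro j
    exact (hiter (1/((j:ℝ)+1)) (by positivity)).2
  -- Fatou over the truncations
  have hmono : ∀ᵐ a ∂μ, ∀ n : ℕ, 0 ≤ h (n+1) a ∧ h (n+1) a ≤ h (n+1+1) a := by
    filter_upwards with a n
    refine ⟨hh0 (n+1) a, min_le_min le_rfl ?_⟩
    have := hu0 a
    have hc : ((n:ℝ)+1) ≤ ((n:ℝ)+1+1) := by linarith
    push_cast
    nlinarith
  have hten2 : ∀ᵐ a ∂μ, Tendsto (fun n : ℕ => h (n+1) a) atTop (nhds (|x a * g a|)) := by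
    filter_upwards [hupos] with a ha
    obtain ⟨N, hN⟩ := exists_nat_ge (|x a * g a| / u a)
    apply tendsto_atTop_of_eventually_const (i₀ := N)
    intro n hn
    have : |x a * g a| ≤ ((n:ℝ)+1) * u a := by
      rw [div_le_iff₀ ha] at hN
      calc |x a * g a| ≤ (N:ℝ) * u a := hN
        _ ≤ ((n:ℝ)+1) * u a := by
            apply mul_le_mul_of_nonneg_right _ (le_of_lt ha)
            push_cast
            have : (N:ℝ) ≤ (n:ℝ) := by exact_mod_cast hn
            linarith
    simp only [hh]
    rw [min_eq_left (by push_cast at this ⊢; linarith [this])]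
  obtain ⟨habs, htennorm⟩ := hE (fun n => h (n+1)) (fun a => |x a * g a|)
    (fun n => (hkey (n+1) (by omega)).1) hmono hten2
    ⟨D ^ (1/β), fun n => (hkey (n+1) (by omega)).2⟩
  have hnf : E.norm (fun a => |x a * g a|) ≤ D ^ (1/β) :=
    le_of_tendsto htennorm (Eventually.of_forall (fun n => (hkey (n+1) (by omega)).2))
  constructor
  · apply E.ideal_mem habs
    filter_upwards with a
    simp [abs_abs]
  · refine le_trans (E.ideal_norm habs ?_) hnf
    filter_upwards with a
    simp [abs_abs]

end Hard
section Opt1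

open Filter

variable {α : Type*} [MeasurableSpace α] {μ : Measure α}

/-- convergence of a geometric-type series in an ideal space: the partial sums of
`(1/2)^k * |w k|` with `‖w k‖ ≤ 1` admit a common majorant in the space. -/
lemma geom_majorant (X : IdealSpace μ) (w : ℕ → α → ℝ)
    (hmem : ∀ k, w k ∈ X.carrier) (hn : ∀ k, X.norm (w k) ≤ 1) :
    ∃ W : α → ℝ, W ∈ X.carrier ∧
      ∀ j : ℕ, ∀ᵐ a ∂μ, (1/2:ℝ)^j * |w j a| ≤ |W a| := by
  set b : ℕ → α → ℝ := fun k a => (1/2:ℝ)^k * |w k a| with hb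
  have hb0 : ∀ k a, 0 ≤ b k a := fun k a => by positivity
  have hbdom : ∀ k, ∀ᵐ a ∂μ, |b k a| ≤ |(((1/2:ℝ)^k) • w k) a| := by
    intro k
    filter_upwards with a
    simp only [hb, Pi.smul_apply, smul_eq_mul, abs_mul, abs_abs, abs_pow]
    norm_num
  have hbmem : ∀ k, b k ∈ X.carrier := fun k => X.ideal_mem (X.smul_mem _ (hmem k)) (hbdom k)
  have hbnorm : ∀ k, X.norm (b k) ≤ (1/2:ℝ)^k := by
    intro k
    refine le_trans (X.ideal_norm (X.smul_mem _ (hmem k)) (hbdom k)) ?_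
    rw [X.norm_smul, abs_pow]
    calc |(1/2:ℝ)|^k * X.norm (w k) ≤ |(1/2:ℝ)|^k * 1 :=
          mul_le_mul_of_nonneg_left (hn k) (by positivity)
      _ = (1/2:ℝ)^k := by
          rw [mul_one, abs_of_pos (by norm_num : (0:ℝ) < 1/2)]
  set s : ℕ → α → ℝ := fun N a => ∑ k ∈ Finset.range N, b k a with hs
  have hsmem : ∀ N, s N ∈ X.carrier := fun N => sum_mem_fin X _ _ (fun k _ => hbmem k)
  have hsub_norm : ∀ m n : ℕ, n ≤ m → X.norm (s m - s n) ≤ (1/2:ℝ)^n / (1 - 1/2) := by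
    intro m n hnm
    have hdiff : s m - s n = (fun a => ∑ k ∈ Finset.Ico n m, b k a) := by
      funext a
      simp only [Pi.sub_apply, hs]
      rw [Finset.sum_Ico_eq_sub _ hnm]
    rw [hdiff]
    refine le_trans (norm_sum_le_fin X _ _ (fun k _ => hbmem k)) ?_
    refine le_trans (Finset.sum_le_sum (fun k _ => hbnorm k)) ?_
    exact geom_sum_Ico_le_of_lt_one (by norm_num) (by norm_num)
  have hcauchy : ∀ ε' > 0, ∃ N, ∀ m ≥ N, ∀ n ≥ N, X.norm (s m - s n) < ε' := by
    intro ε' hε'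
    have hten : Tendsto (fun n : ℕ => ((1:ℝ)/2)^n / (1 - 1/2)) atTop (nhds 0) := by
      have := tendsto_pow_atTop_nhds_zero_of_lt_one (show (0:ℝ) ≤ 1/2 by norm_num)
        (by norm_num)
      simpa using this.div_const ((1:ℝ) - 1/2)
    obtain ⟨N, hN⟩ := (Metric.tendsto_atTop.1 hten) ε' hε'
    refine ⟨N, fun m hm n hn => ?_⟩
    have hNb : ((1:ℝ)/2) ^ N / (1 - 1/2) < ε' := by
      have := hN N le_rfl
      rwa [Real.dist_eq, sub_zero, abs_of_nonneg (by positivity)] at this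
    have key : ∀ m' n' : ℕ, N ≤ n' → n' ≤ m' → X.norm (s m' - s n') < ε' := by
      intro m' n' hNn' hn'm'
      refine lt_of_le_of_lt (le_trans (hsub_norm m' n' hn'm') ?_) hNb
      apply div_le_div_of_nonneg_right _ (by norm_num)
      exact pow_le_pow_of_le_one (by norm_num) (by norm_num) hNn'
    rcases le_total n m with hc | hc
    · exact key m n hn hc
    · have : s m - s n = (-1 : ℝ) • (s n - s m) := by funext a; simp
      rw [this, X.norm_smul]
      simpa using key n m hm hc
  obtain ⟨W, hWm, hWt⟩ := X.complete s hsmem hcauchy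
  have hsmono : ∀ n m : ℕ, n ≤ m → ∀ a, s n a ≤ s m a := by
    intro n m hnm a
    apply Finset.sum_le_sum_of_subset_of_nonneg (Finset.range_subset_range.2 hnm)
    intro k _ _; exact hb0 k a
  have hsle : ∀ N, ∀ᵐ a ∂μ, s N a ≤ W a :=
    X.le_of_tendsto_norm_sub s W hsmem hWm hsmono hWt
  refine ⟨W, hWm, fun j => ?_⟩
  filter_upwards [hsle (j+1)] with a ha
  have h1 : b j a ≤ s (j+1) a := by
    simp only [hs]
    apply Finset.single_le_sum (f := fun k => b k a) (fun k _ => hb0 k a)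
    simp
  calc (1/2:ℝ)^j * |w j a| = b j a := rfl
    _ ≤ s (j+1) a := h1
    _ ≤ W a := ha
    _ ≤ |W a| := le_abs_self _

lemma opt1 (E F G : IdealSpace μ) {β : ℝ} (hβ0 : 0 < β) (hβ1 : β < 1) (x : α → ℝ)
    (hQ : ∀ z ∈ caldSet β G F, (fun a => |x a| ^ β) * z ∈ caldSet β E F) :
    BddAbove {r : ℝ | ∃ z ∈ caldSet β G F, caldNorm β G F z ≤ 1 ∧
      r = caldNorm β E F ((fun a => |x a| ^ β) * z)} := by
  by_contra hcon
  rw [not_bddAbove_iff] at hcon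
  have hpick : ∀ j : ℕ, ∃ z, z ∈ caldSet β G F ∧ caldNorm β G F z ≤ 1 ∧
      (j:ℝ) * 2^j < caldNorm β E F ((fun a => |x a| ^ β) * z) := by
    intro j
    obtain ⟨r, ⟨z, hz, hzn, hr⟩, hrb⟩ := hcon ((j:ℝ) * 2^j)
    exact ⟨z, hz, hzn, hr ▸ hrb⟩
  choose zs hzs1 hzs2 hzs3 using hpick
  have hwit : ∀ j : ℕ, ∃ gj, gj ∈ G.carrier ∧ G.norm gj ≤ 1 ∧ ∃ fj, fj ∈ F.carrier ∧
      F.norm fj ≤ 1 ∧ ∀ᵐ a ∂μ, |zs j a| ≤ 2 * |gj a| ^ β * |fj a| ^ (1-β) := by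
    intro j
    obtain ⟨lam, hlamW, hlam2⟩ := caldNorm_extract (hzs1 j) (hzs2 j) one_pos
    obtain ⟨hlam0, gj, hgjm, fj, hfjm, hgjn, hfjn, hae⟩ := hlamW
    refine ⟨gj, hgjm, hgjn, fj, hfjm, hfjn, ?_⟩
    filter_upwards [hae] with a ha
    refine le_trans ha ?_
    have h2 : lam ≤ 2 := by linarith
    apply mul_le_mul_of_nonneg_right _ (Real.rpow_nonneg (abs_nonneg _) _)
    exact mul_le_mul_of_nonneg_right h2 (Real.rpow_nonneg (abs_nonneg _) _)
  choose gs hgs1 hgs2 fs' hfs1 hfs2 hae2 using hwit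
  obtain ⟨Gs, hGsm, hGsd⟩ := geom_majorant G gs hgs1 hgs2
  obtain ⟨Fs, hFsm, hFsd⟩ := geom_majorant F fs' hfs1 hfs2
  -- the combined element
  set zst : α → ℝ := fun a => 2 * |Gs a| ^ β * |Fs a| ^ (1-β) with hzst
  have hzst_mem : zst ∈ caldSet β G F := by
    set mG := max 1 (G.norm Gs) with hmG
    set mF := max 1 (F.norm Fs) with hmF
    have hmG0 : (0:ℝ) < mG := lt_of_lt_of_le one_pos (le_max_left _ _)
    have hmF0 : (0:ℝ) < mF := lt_of_lt_of_le one_pos (le_max_left _ _)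
    refine ⟨2 * mG ^ β * mF ^ (1-β), by positivity, mG⁻¹ • Gs, G.smul_mem _ hGsm,
      mF⁻¹ • Fs, F.smul_mem _ hFsm, ?_, ?_, ?_⟩
    · rw [G.norm_smul, abs_inv, abs_of_pos hmG0, inv_mul_le_iff₀ hmG0, mul_one]
      exact le_max_right _ _
    · rw [F.norm_smul, abs_inv, abs_of_pos hmF0, inv_mul_le_iff₀ hmF0, mul_one]
      exact le_max_right _ _
    · filter_upwards with a
      have hz0 : |zst a| = 2 * |Gs a| ^ β * |Fs a| ^ (1-β) := by
        rw [hzst, abs_of_nonneg (by positivity)]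
      rw [hz0]
      apply le_of_eq
      have hG1 : |(mG⁻¹ • Gs) a| ^ β = mG⁻¹ ^ β * |Gs a| ^ β := by
        simp only [Pi.smul_apply, smul_eq_mul, abs_mul, abs_inv, abs_of_pos hmG0]
        rw [Real.mul_rpow (by positivity) (abs_nonneg _)]
      have hF1 : |(mF⁻¹ • Fs) a| ^ (1-β) = mF⁻¹ ^ (1-β) * |Fs a| ^ (1-β) := by
        simp only [Pi.smul_apply, smul_eq_mul, abs_mul, abs_inv, abs_of_pos hmF0]
        rw [Real.mul_rpow (by positivity) (abs_nonneg _)]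
      rw [hG1, hF1]
      have hGc : mG ^ β * mG⁻¹ ^ β = 1 := by
        rw [← Real.mul_rpow (by positivity) (by positivity), mul_inv_cancel₀ (ne_of_gt hmG0),
          Real.one_rpow]
      have hFc : mF ^ (1-β) * mF⁻¹ ^ (1-β) = 1 := by
        rw [← Real.mul_rpow (by positivity) (by positivity), mul_inv_cancel₀ (ne_of_gt hmF0),
          Real.one_rpow]
      calc 2 * |Gs a| ^ β * |Fs a| ^ (1-β)
          = (mG ^ β * mG⁻¹ ^ β) * (mF ^ (1-β) * mF⁻¹ ^ (1-β)) *
            (2 * |Gs a| ^ β * |Fs a| ^ (1-β)) := by rw [hGc, hFc]; ring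
        _ = 2 * mG ^ β * mF ^ (1-β) * (mG⁻¹ ^ β * |Gs a| ^ β) *
            (mF⁻¹ ^ (1-β) * |Fs a| ^ (1-β)) := by ring
  have himg := hQ zst hzst_mem
  obtain ⟨lam0, hlam0W⟩ := mem_caldSet_iff.1 himg
  -- every scaled image is dominated by the image of zst
  have hdomj : ∀ j : ℕ, ∀ᵐ a ∂μ,
      |((fun a => |x a| ^ β) * (((1/2:ℝ)^j) • zs j)) a| ≤
        |((fun a => |x a| ^ β) * zst) a| := by
    intro j
    filter_upwards [hae2 j, hGsd j, hFsd j] with a h1 h2 h3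
    have hsplit : ((1/2:ℝ)^j : ℝ) = ((1/2:ℝ)^j) ^ β * ((1/2:ℝ)^j) ^ (1-β) := by
      rw [← Real.rpow_add' (by positivity) (by norm_num)]
      norm_num
    simp only [Pi.mul_apply, Pi.smul_apply, smul_eq_mul]
    have hzsta : |zst a| = 2 * |Gs a| ^ β * |Fs a| ^ (1-β) := by
      rw [hzst, abs_of_nonneg (by positivity)]
    have hL : |(|x a| ^ β * ((1/2:ℝ)^j * zs j a))| =
        |x a| ^ β * ((1/2:ℝ)^j * |zs j a|) := by
      rw [abs_mul, abs_mul, abs_of_nonneg (Real.rpow_nonneg (abs_nonneg (x a)) β), abs_pow,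
        abs_of_pos (by norm_num : (0:ℝ) < 1/2)]
    have hR : |(|x a| ^ β * zst a)| = |x a| ^ β * (2 * |Gs a| ^ β * |Fs a| ^ (1-β)) := by
      rw [abs_mul, abs_of_nonneg (Real.rpow_nonneg (abs_nonneg (x a)) β), hzsta]
    rw [hL, hR]
    apply mul_le_mul_of_nonneg_left _ (Real.rpow_nonneg (abs_nonneg (x a)) β)
    calc (1/2:ℝ)^j * |zs j a| ≤ (1/2:ℝ)^j * (2 * |gs j a| ^ β * |fs' j a| ^ (1-β)) :=
          mul_le_mul_of_nonneg_left h1 (by positivity)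
      _ = 2 * (((1/2:ℝ)^j) ^ β * |gs j a| ^ β) * (((1/2:ℝ)^j) ^ (1-β) * |fs' j a| ^ (1-β)) := by
          conv_lhs => rw [hsplit]
          ring
      _ = 2 * (((1/2:ℝ)^j) * |gs j a|) ^ β * (((1/2:ℝ)^j) * |fs' j a|) ^ (1-β) := by
          rw [Real.mul_rpow (by positivity) (abs_nonneg _),
            Real.mul_rpow (by positivity) (abs_nonneg _)]
      _ ≤ 2 * |Gs a| ^ β * |Fs a| ^ (1-β) := by
          apply mul_le_mul _ _ (Real.rpow_nonneg (by positivity) _) (by positivity)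
          · apply mul_le_mul_of_nonneg_left _ (by norm_num)
            exact Real.rpow_le_rpow (by positivity) h2 (le_of_lt hβ0)
          · exact Real.rpow_le_rpow (by positivity) h3 (by linarith)
  -- contradiction
  obtain ⟨J, hJ⟩ := exists_nat_gt lam0
  have hJle : caldNorm β E F ((fun a => |x a| ^ β) * (((1/2:ℝ)^J) • zs J)) ≤ lam0 :=
    caldNorm_le_of_mem (caldW_mono (hdomj J) hlam0W)
  have heq : (fun a => |x a| ^ β) * (((1/2:ℝ)^J) • zs J) =
      ((1/2:ℝ)^J) • ((fun a => |x a| ^ β) * zs J) := by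
    funext a; simp only [Pi.mul_apply, Pi.smul_apply, smul_eq_mul]; ring
  rw [heq, caldNorm_smul (by positivity : (0:ℝ) < (1/2:ℝ)^J)] at hJle
  have hgt : (J:ℝ) < (1/2:ℝ)^J * caldNorm β E F ((fun a => |x a| ^ β) * zs J) := by
    have := hzs3 J
    have h2 : (1/2:ℝ)^J * ((J:ℝ) * 2^J) < (1/2:ℝ)^J * caldNorm β E F
        ((fun a => |x a| ^ β) * zs J) := by
      apply mul_lt_mul_of_pos_left this (by positivity)
    have h3 : (1/2:ℝ)^J * ((J:ℝ) * 2^J) = (J:ℝ) := by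
      rw [show (1/2:ℝ)^J * ((J:ℝ) * 2^J) = (J:ℝ) * ((1/2:ℝ)^J * 2^J) by ring,
        ← mul_pow]
      norm_num
    linarith
  linarith
end Opt1
/-- Proposition 2: if E has the Fatou property and 0 < θ < 1, then
M(G, E) ≡ M(G^{1-θ}F^θ, E^{1-θ}F^θ)^{(1-θ)} isometrically. -/
theorem multiplier_calderon_identity (E F G : IdealSpace μ) (hE : HasFatou E)
    (θ : ℝ) (hθ : 0 < θ) (hθ1 : θ < 1) (x : α → ℝ) :
    (x ∈ multSet G.carrier E.carrier ↔
      (fun a => |x a| ^ (1 - θ)) ∈ multSet (caldSet (1 - θ) G F) (caldSet (1 - θ) E F)) ∧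
    multNorm G.carrier G.norm E.norm x =
      (multNorm (caldSet (1 - θ) G F) (caldNorm (1 - θ) G F) (caldNorm (1 - θ) E F)
        (fun a => |x a| ^ (1 - θ))) ^ (1 / (1 - θ)) := by
  set β : ℝ := 1 - θ with hβ
  have hβ0 : 0 < β := by rw [hβ]; linarith
  have hβ1 : β < 1 := by rw [hβ]; linarith
  set A : Set ℝ := {r | ∃ y ∈ G.carrier, G.norm y ≤ 1 ∧ r = E.norm (x * y)} with hA
  set B : Set ℝ := {r | ∃ z ∈ caldSet β G F, caldNorm β G F z ≤ 1 ∧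
      r = caldNorm β E F ((fun a => |x a| ^ β) * z)} with hB
  have h0A : (0:ℝ) ∈ A := by
    refine ⟨0, G.zero_mem, by rw [G.norm_zero']; norm_num, ?_⟩
    have hx0 : x * (0 : α → ℝ) = 0 := by funext a; simp
    rw [hx0, E.norm_zero']
  have h0B : (0:ℝ) ∈ B := by
    refine ⟨0, zero_mem_caldSet (ne_of_gt hβ0) G F, ?_, ?_⟩
    · rw [caldNorm_zero (ne_of_gt hβ0)]; norm_num
    · have hx0 : (fun a => |x a| ^ β) * (0 : α → ℝ) = 0 := by funext a; simp
      rw [hx0, caldNorm_zero (ne_of_gt hβ0)]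
  have hmem_iff : x ∈ multSet G.carrier E.carrier ↔
      (fun a => |x a| ^ β) ∈ multSet (caldSet β G F) (caldSet β E F) := by
    constructor
    · intro hx z hz
      exact easy_mem hβ0 hβ1 E F G x hx z hz
    · intro hQ g hg
      have hBdd : BddAbove B := opt1 E F G hβ0 hβ1 x hQ
      have hDub : ∀ r ∈ B, r ≤ sSup B := fun r hr => le_csSup hBdd hr
      have hD0 : (0:ℝ) ≤ sSup B := hDub 0 h0B
      have hhard := hard E F G hE hβ0 hβ1 x (sSup B) hD0
        (fun z hz hzn => hDub _ ⟨z, hz, hzn, rfl⟩)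
      set m := max 1 (G.norm g) with hm
      have hm0 : (0:ℝ) < m := lt_of_lt_of_le one_pos (le_max_left _ _)
      have hgm : m⁻¹ • g ∈ G.carrier := G.smul_mem _ hg
      have hgn : G.norm (m⁻¹ • g) ≤ 1 := by
        rw [G.norm_smul, abs_inv, abs_of_pos hm0, inv_mul_le_iff₀ hm0, mul_one]
        exact le_max_right _ _
      have hmem := (hhard _ hgm hgn).1
      have heq : x * g = m • (x * (m⁻¹ • g)) := by
        funext a; simp only [Pi.mul_apply, Pi.smul_apply, smul_eq_mul]
        field_simp
      rw [heq]
      exact E.smul_mem _ hmem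
  refine ⟨hmem_iff, ?_⟩
  show sSup A = (sSup B) ^ (1/β)
  by_cases hBdd : BddAbove B
  · have hDub : ∀ r ∈ B, r ≤ sSup B := fun r hr => le_csSup hBdd hr
    have hD0 : (0:ℝ) ≤ sSup B := hDub 0 h0B
    have hhard := hard E F G hE hβ0 hβ1 x (sSup B) hD0
      (fun z hz hzn => hDub _ ⟨z, hz, hzn, rfl⟩)
    have hAub : ∀ r ∈ A, r ≤ (sSup B) ^ (1/β) := by
      rintro r ⟨y, hy, hyn, rfl⟩
      exact (hhard y hy hyn).2
    have hle1 : sSup A ≤ (sSup B) ^ (1/β) := csSup_le ⟨0, h0A⟩ hAub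
    have hAbdd : BddAbove A := ⟨(sSup B) ^ (1/β), hAub⟩
    have hMub : ∀ r ∈ A, r ≤ sSup A := fun r hr => le_csSup hAbdd hr
    have hM0 : (0:ℝ) ≤ sSup A := hMub 0 h0A
    have htr := trunc_bound E G hE x (sSup A) (fun g' hg' hgn' => hMub _ ⟨g', hg', hgn', rfl⟩)
    have hBub : ∀ r ∈ B, r ≤ (sSup A) ^ β := by
      rintro r ⟨z, hz, hzn, rfl⟩
      exact easy_bound hβ0 hβ1 E F G x (sSup A) hM0 htr z hz hzn
    have hle2 : sSup B ≤ (sSup A) ^ β := csSup_le ⟨0, h0B⟩ hBub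
    have hle2' : (sSup B) ^ (1/β) ≤ sSup A := by
      calc (sSup B) ^ (1/β) ≤ ((sSup A) ^ β) ^ (1/β) :=
            Real.rpow_le_rpow hD0 hle2 (by positivity)
        _ = sSup A := by
            rw [← Real.rpow_mul hM0, mul_one_div, div_self (ne_of_gt hβ0), Real.rpow_one]
    exact le_antisymm hle1 hle2'
  · have hsB : sSup B = 0 := Real.sSup_of_not_bddAbove hBdd
    have hAnb : ¬ BddAbove A := by
      intro hAbdd
      have hMub : ∀ r ∈ A, r ≤ sSup A := fun r hr => le_csSup hAbdd hr
      have hM0 : (0:ℝ) ≤ sSup A := hMub 0 h0A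
      have htr := trunc_bound E G hE x (sSup A) (fun g' hg' hgn' => hMub _ ⟨g', hg', hgn', rfl⟩)
      have hBub : ∀ r ∈ B, r ≤ (sSup A) ^ β := by
        rintro r ⟨z, hz, hzn, rfl⟩
        exact easy_bound hβ0 hβ1 E F G x (sSup A) hM0 htr z hz hzn
      exact hBdd ⟨(sSup A) ^ β, hBub⟩
    rw [hsB, Real.sSup_of_not_bddAbove hAnb, Real.zero_rpow (ne_of_gt (by positivity))]
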